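/- Let u : ℝ → ℝ be six times continuously differentiable (ContDiff ℝ 6), x ∈ ℝ, and h > 0. Then there exists ξ ∈ [x − 2h, x + 2h] such that (u(x+2h) − 4u(x+h) + 6u(x) − 4u(x−h) + u(x−2h))/h⁴ = u⁽⁴⁾(x) + (h²/6)·u⁽⁶⁾(ξ). Equivalently, the one-dimensional numerical moment satisfies δ²_{2h}u(x) − δ²_h u(x) = (h²/4)·( u⁽⁴⁾(x) + (h²/6)·u⁽⁶⁾(ξ) ). -/

import Mathlib

open intervalIntegral Set

lemma pow5_int (p q c d a b : ℝ) :
    (∫ s in a..b, (p * (c - s) ^ 5 + q * (d - s) ^ 5) / 120)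
      = (p * ((c - a) ^ 6 - (c - b) ^ 6) + q * ((d - a) ^ 6 - (d - b) ^ 6)) / 720 := by
  have hD : ∀ s : ℝ, HasDerivAt
      (fun s => (-(p * (c - s) ^ 6) / 6 - q * (d - s) ^ 6 / 6) / 120)
      ((p * (c - s) ^ 5 + q * (d - s) ^ 5) / 120) s := by
    intro s
    have h1 := (((hasDerivAt_id s).const_sub c).pow 6).const_mul p
    have h2 := (((hasDerivAt_id s).const_sub d).pow 6).const_mul q
    have := ((h1.neg.div_const 6).sub (h2.div_const 6)).div_const 120
    refine this.congr_deriv ?_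
    simp only [id_eq]
    push_cast
    ring
  rw [intervalIntegral.integral_eq_sub_of_hasDerivAt (fun s _ => hD s)
    ((Continuous.intervalIntegrable (by fun_prop) a b))]
  ring

lemma ker5_nonneg {a h : ℝ} (h0 : 0 ≤ a) (h1 : a ≤ h) : 0 ≤ (a + h) ^ 5 - 4 * a ^ 5 := by
  have h2 : (2 * a) ^ 5 ≤ (a + h) ^ 5 := by
    apply pow_le_pow_left₀ (by linarith) (by linarith)
  nlinarith [pow_nonneg h0 5]

lemma bound_piece {f K : ℝ → ℝ} {a b m M : ℝ} (hab : a ≤ b) (hf : Continuous f)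
    (hK : Continuous K) (hK0 : ∀ s ∈ Set.Icc a b, 0 ≤ K s)
    (hm : ∀ s ∈ Set.Icc a b, m ≤ f s) (hM : ∀ s ∈ Set.Icc a b, f s ≤ M) :
    m * (∫ s in a..b, K s) ≤ (∫ s in a..b, f s * K s)
      ∧ (∫ s in a..b, f s * K s) ≤ M * (∫ s in a..b, K s) := by
  constructor
  · rw [← intervalIntegral.integral_const_mul]
    apply intervalIntegral.integral_mono_on hab
      (Continuous.intervalIntegrable (by fun_prop) a b)
      (Continuous.intervalIntegrable (by fun_prop) a b)
    intro s hs
    exact mul_le_mul_of_nonneg_right (hm s hs) (hK0 s hs)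
  · rw [← intervalIntegral.integral_const_mul]
    apply intervalIntegral.integral_mono_on hab
      (Continuous.intervalIntegrable (by fun_prop) a b)
      (Continuous.intervalIntegrable (by fun_prop) a b)
    intro s hs
    exact mul_le_mul_of_nonneg_right (hM s hs) (hK0 s hs)

lemma taylor6_integral {u : ℝ → ℝ} (hu : ContDiff ℝ 6 u) (x t : ℝ) :
    u t = u x + iteratedDeriv 1 u x * (t - x) + iteratedDeriv 2 u x * (t - x) ^ 2 / 2
      + iteratedDeriv 3 u x * (t - x) ^ 3 / 6 + iteratedDeriv 4 u x * (t - x) ^ 4 / 24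
      + iteratedDeriv 5 u x * (t - x) ^ 5 / 120
      + ∫ s in x..t, iteratedDeriv 6 u s * (t - s) ^ 5 / 120 := by
  have hD : ∀ k < 6, ∀ s : ℝ, HasDerivAt (iteratedDeriv k u) (iteratedDeriv (k+1) u s) s := by
    intro k hk s
    rw [iteratedDeriv_succ]
    exact hasDerivAt_deriv_iff.mpr (hu.differentiable_iteratedDeriv k (by exact_mod_cast hk) s)
  set g : ℝ → ℝ := fun s => u s + iteratedDeriv 1 u s * (t - s)
      + iteratedDeriv 2 u s * (t - s) ^ 2 / 2 + iteratedDeriv 3 u s * (t - s) ^ 3 / 6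
      + iteratedDeriv 4 u s * (t - s) ^ 4 / 24 + iteratedDeriv 5 u s * (t - s) ^ 5 / 120
    with hg
  have hgderiv : ∀ s : ℝ, HasDerivAt g (iteratedDeriv 6 u s * (t - s) ^ 5 / 120) s := by
    intro s
    have hpow : ∀ n : ℕ, HasDerivAt (fun s : ℝ => (t - s) ^ n)
        (-(n * (t - s) ^ (n - 1))) s := by
      intro n
      have := ((hasDerivAt_id s).const_sub t).pow n
      simpa [Pi.pow_def] using this
    have h0 : HasDerivAt u (iteratedDeriv 1 u s) s := by
      simpa [iteratedDeriv_one] using hD 0 (by norm_num) s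
    have h1 := ((hD 1 (by norm_num) s).mul ((hasDerivAt_id s).const_sub t))
    have h2 := (((hD 2 (by norm_num) s).mul (hpow 2)).div_const 2)
    have h3 := (((hD 3 (by norm_num) s).mul (hpow 3)).div_const 6)
    have h4 := (((hD 4 (by norm_num) s).mul (hpow 4)).div_const 24)
    have h5 := (((hD 5 (by norm_num) s).mul (hpow 5)).div_const 120)
    have := ((((h0.add h1).add h2).add h3).add h4).add h5
    refine this.congr_deriv ?_
    push_cast
    simp only [id_eq]
    ring
  have hcont : Continuous (fun s => iteratedDeriv 6 u s * (t - s) ^ 5 / 120) := by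
    have := hu.continuous_iteratedDeriv 6 le_rfl
    fun_prop
  have := intervalIntegral.integral_eq_sub_of_hasDerivAt
      (f := g) (fun s _ => hgderiv s) (hcont.intervalIntegrable x t)
  rw [this, hg]
  simp

set_option maxHeartbeats 2000000 in
/-- Taylor expansion of the one-dimensional numerical moment: for `u ∈ C⁶` there is
`ξ ∈ [x − 2h, x + 2h]` with
`(u(x+2h) − 4u(x+h) + 6u(x) − 4u(x−h) + u(x−2h))/h⁴ = u⁽⁴⁾(x) + (h²/6) u⁽⁶⁾(ξ)`,
and equivalently `δ²_{2h}u(x) − δ²_h u(x) = (h²/4)(u⁽⁴⁾(x) + (h²/6) u⁽⁶⁾(ξ))`. -/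
theorem numerical_moment_taylor
    (u : ℝ → ℝ) (hu : ContDiff ℝ 6 u) (x h : ℝ) (hh : 0 < h) :
    ∃ ξ ∈ Set.Icc (x - 2 * h) (x + 2 * h),
      (u (x + 2 * h) - 4 * u (x + h) + 6 * u x - 4 * u (x - h) + u (x - 2 * h)) / h ^ 4
        = iteratedDeriv 4 u x + h ^ 2 / 6 * iteratedDeriv 6 u ξ ∧
      (u (x + 2 * h) - 2 * u x + u (x - 2 * h)) / (4 * h ^ 2)
          - (u (x + h) - 2 * u x + u (x - h)) / h ^ 2
        = h ^ 2 / 4 * (iteratedDeriv 4 u x + h ^ 2 / 6 * iteratedDeriv 6 u ξ) := by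
  have hne : h ≠ 0 := ne_of_gt hh
  set f : ℝ → ℝ := iteratedDeriv 6 u with hf
  have hfc : Continuous f := hu.continuous_iteratedDeriv 6 le_rfl
  -- the four Taylor expansions
  have e1 := taylor6_integral hu x (x + 2 * h)
  have e2 := taylor6_integral hu x (x + h)
  have e3 := taylor6_integral hu x (x - h)
  have e4 := taylor6_integral hu x (x - 2 * h)
  -- names for the integrals
  set I1 : ℝ := ∫ s in x..x + 2 * h, f s * (x + 2 * h - s) ^ 5 / 120 with hI1
  set I2 : ℝ := ∫ s in x..x + h, f s * (x + h - s) ^ 5 / 120 with hI2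
  set I3 : ℝ := ∫ s in x..x - h, f s * (x - h - s) ^ 5 / 120 with hI3
  set I4 : ℝ := ∫ s in x..x - 2 * h, f s * (x - 2 * h - s) ^ 5 / 120 with hI4
  set L : ℝ := u (x + 2 * h) - 4 * u (x + h) + 6 * u x - 4 * u (x - h) + u (x - 2 * h) with hL
  have key0 : L = h ^ 4 * iteratedDeriv 4 u x + (I1 - 4 * I2 - 4 * I3 + I4) := by
    linear_combination e1 - 4 * e2 - 4 * e3 + e4
  -- flip the negative-side integrals
  have flip3 : I3 = ∫ s in x - h..x, f s * (s - (x - h)) ^ 5 / 120 := by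
    rw [hI3, intervalIntegral.integral_symm, ← intervalIntegral.integral_neg]
    congr 1
    funext s
    ring
  have flip4 : I4 = ∫ s in x - 2 * h..x, f s * (s - (x - 2 * h)) ^ 5 / 120 := by
    rw [hI4, intervalIntegral.integral_symm, ← intervalIntegral.integral_neg]
    congr 1
    funext s
    ring
  -- split I1 and I4
  have intg : ∀ (g : ℝ → ℝ), Continuous g → ∀ a b : ℝ,
      IntervalIntegrable (fun s => f s * g s / 120) MeasureTheory.volume a b := by
    intro g hg a b
    exact Continuous.intervalIntegrable (by fun_prop) a b
  have split1 : (∫ s in x..x + h, f s * (x + 2 * h - s) ^ 5 / 120)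
      + (∫ s in x + h..x + 2 * h, f s * (x + 2 * h - s) ^ 5 / 120) = I1 :=
    intervalIntegral.integral_add_adjacent_intervals
      (intg _ (by fun_prop) _ _) (intg _ (by fun_prop) _ _)
  have split4 : (∫ s in x - 2 * h..x - h, f s * (s - (x - 2 * h)) ^ 5 / 120)
      + (∫ s in x - h..x, f s * (s - (x - 2 * h)) ^ 5 / 120)
      = ∫ s in x - 2 * h..x, f s * (s - (x - 2 * h)) ^ 5 / 120 :=
    intervalIntegral.integral_add_adjacent_intervals
      (intg _ (by fun_prop) _ _) (intg _ (by fun_prop) _ _)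
  -- canonical-kernel pieces
  set A1 : ℝ := ∫ s in x..x + h,
      f s * ((1 * (x + 2 * h - s) ^ 5 + (-4) * (x + h - s) ^ 5) / 120) with hA1
  set A2 : ℝ := ∫ s in x + h..x + 2 * h,
      f s * ((1 * (x + 2 * h - s) ^ 5 + 0 * (x + h - s) ^ 5) / 120) with hA2
  set A3 : ℝ := ∫ s in x - h..x,
      f s * (((-1) * (x - 2 * h - s) ^ 5 + 4 * (x - h - s) ^ 5) / 120) with hA3
  set A4 : ℝ := ∫ s in x - 2 * h..x - h,
      f s * (((-1) * (x - 2 * h - s) ^ 5 + 0 * (x - h - s) ^ 5) / 120) with hA4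
  have hA1' : A1 = (∫ s in x..x + h, f s * (x + 2 * h - s) ^ 5 / 120) - 4 * I2 := by
    rw [hA1, hI2, show (fun s => f s * ((1 * (x + 2 * h - s) ^ 5 + (-4) * (x + h - s) ^ 5) / 120))
        = fun s => f s * (x + 2 * h - s) ^ 5 / 120 - 4 * (f s * (x + h - s) ^ 5 / 120) from
      funext fun s => by ring]
    rw [intervalIntegral.integral_sub (intg _ (by fun_prop) _ _)
      ((intg _ (by fun_prop) _ _).const_mul 4), intervalIntegral.integral_const_mul]
  have hA2' : A2 = ∫ s in x + h..x + 2 * h, f s * (x + 2 * h - s) ^ 5 / 120 := by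
    rw [hA2]
    congr 1
    funext s
    ring
  have hA3' : A3 = (∫ s in x - h..x, f s * (s - (x - 2 * h)) ^ 5 / 120)
      - 4 * ∫ s in x - h..x, f s * (s - (x - h)) ^ 5 / 120 := by
    rw [hA3, show (fun s => f s * (((-1) * (x - 2 * h - s) ^ 5 + 4 * (x - h - s) ^ 5) / 120))
        = fun s => f s * (s - (x - 2 * h)) ^ 5 / 120 - 4 * (f s * (s - (x - h)) ^ 5 / 120) from
      funext fun s => by ring]
    rw [intervalIntegral.integral_sub (intg _ (by fun_prop) _ _)
      ((intg _ (by fun_prop) _ _).const_mul 4), intervalIntegral.integral_const_mul]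
  have hA4' : A4 = ∫ s in x - 2 * h..x - h, f s * (s - (x - 2 * h)) ^ 5 / 120 := by
    rw [hA4]
    congr 1
    funext s
    ring
  have key : L = h ^ 4 * iteratedDeriv 4 u x + (A1 + A2 + A3 + A4) := by
    rw [key0, flip3, flip4, ← split1, ← split4, hA1', hA2', hA3', hA4']
    ring
  -- extrema of f on the interval
  have hxK : x ∈ Set.Icc (x - 2 * h) (x + 2 * h) := by constructor <;> linarith
  obtain ⟨a, haK, ha⟩ := isCompact_Icc.exists_isMinOn ⟨x, hxK⟩ hfc.continuousOn
  obtain ⟨b, hbK, hb⟩ := isCompact_Icc.exists_isMaxOn ⟨x, hxK⟩ hfc.continuousOn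
  have hm : ∀ s ∈ Set.Icc (x - 2 * h) (x + 2 * h), f a ≤ f s := fun s hs => ha hs
  have hM : ∀ s ∈ Set.Icc (x - 2 * h) (x + 2 * h), f s ≤ f b := fun s hs => hb hs
  -- kernel values
  have C1 : (∫ s in x..x + h, (1 * (x + 2 * h - s) ^ 5 + (-4) * (x + h - s) ^ 5) / 120)
      = 59 * h ^ 6 / 720 := by rw [pow5_int]; ring
  have C2 : (∫ s in x + h..x + 2 * h, (1 * (x + 2 * h - s) ^ 5 + 0 * (x + h - s) ^ 5) / 120)
      = h ^ 6 / 720 := by rw [pow5_int]; ring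
  have C3 : (∫ s in x - h..x, ((-1) * (x - 2 * h - s) ^ 5 + 4 * (x - h - s) ^ 5) / 120)
      = 59 * h ^ 6 / 720 := by rw [pow5_int]; ring
  have C4 : (∫ s in x - 2 * h..x - h, ((-1) * (x - 2 * h - s) ^ 5 + 0 * (x - h - s) ^ 5) / 120)
      = h ^ 6 / 720 := by rw [pow5_int]; ring
  -- kernel nonnegativity
  have hK01 : ∀ s ∈ Set.Icc x (x + h),
      0 ≤ (1 * (x + 2 * h - s) ^ 5 + (-4) * (x + h - s) ^ 5) / 120 := by
    intro s hs
    have h1 := ker5_nonneg (a := x + h - s) (h := h) (by linarith [hs.2]) (by linarith [hs.1])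
    have e : (x + h - s + h) ^ 5 - 4 * (x + h - s) ^ 5
        = 1 * (x + 2 * h - s) ^ 5 + (-4) * (x + h - s) ^ 5 := by ring
    rw [e] at h1
    linarith
  have hK02 : ∀ s ∈ Set.Icc (x + h) (x + 2 * h),
      0 ≤ (1 * (x + 2 * h - s) ^ 5 + 0 * (x + h - s) ^ 5) / 120 := by
    intro s hs
    have h1 := pow_nonneg (show (0:ℝ) ≤ x + 2 * h - s by linarith [hs.2]) 5
    have e : (x + 2 * h - s) ^ 5 = 1 * (x + 2 * h - s) ^ 5 + 0 * (x + h - s) ^ 5 := by ring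
    rw [e] at h1
    linarith
  have hK03 : ∀ s ∈ Set.Icc (x - h) x,
      0 ≤ ((-1) * (x - 2 * h - s) ^ 5 + 4 * (x - h - s) ^ 5) / 120 := by
    intro s hs
    have h1 := ker5_nonneg (a := s - (x - h)) (h := h) (by linarith [hs.1]) (by linarith [hs.2])
    have e : (s - (x - h) + h) ^ 5 - 4 * (s - (x - h)) ^ 5
        = (-1) * (x - 2 * h - s) ^ 5 + 4 * (x - h - s) ^ 5 := by ring
    rw [e] at h1
    linarith
  have hK04 : ∀ s ∈ Set.Icc (x - 2 * h) (x - h),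
      0 ≤ ((-1) * (x - 2 * h - s) ^ 5 + 0 * (x - h - s) ^ 5) / 120 := by
    intro s hs
    have h1 := pow_nonneg (show (0:ℝ) ≤ s - (x - 2 * h) by linarith [hs.1]) 5
    have e : (s - (x - 2 * h)) ^ 5 = (-1) * (x - 2 * h - s) ^ 5 + 0 * (x - h - s) ^ 5 := by ring
    rw [e] at h1
    linarith
  -- bounds on the pieces
  have bp1 := bound_piece (m := f a) (M := f b) (show x ≤ x + h by linarith) hfc
    (by fun_prop) hK01
    (fun s hs => hm s ⟨by linarith [hs.1], by linarith [hs.2]⟩)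
    (fun s hs => hM s ⟨by linarith [hs.1], by linarith [hs.2]⟩)
  have bp2 := bound_piece (m := f a) (M := f b) (show x + h ≤ x + 2 * h by linarith) hfc
    (by fun_prop) hK02
    (fun s hs => hm s ⟨by linarith [hs.1], by linarith [hs.2]⟩)
    (fun s hs => hM s ⟨by linarith [hs.1], by linarith [hs.2]⟩)
  have bp3 := bound_piece (m := f a) (M := f b) (show x - h ≤ x by linarith) hfc
    (by fun_prop) hK03
    (fun s hs => hm s ⟨by linarith [hs.1], by linarith [hs.2]⟩)
    (fun s hs => hM s ⟨by linarith [hs.1], by linarith [hs.2]⟩)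
  have bp4 := bound_piece (m := f a) (M := f b) (show x - 2 * h ≤ x - h by linarith) hfc
    (by fun_prop) hK04
    (fun s hs => hm s ⟨by linarith [hs.1], by linarith [hs.2]⟩)
    (fun s hs => hM s ⟨by linarith [hs.1], by linarith [hs.2]⟩)
  rw [C1, ← hA1] at bp1
  rw [C2, ← hA2] at bp2
  rw [C3, ← hA3] at bp3
  rw [C4, ← hA4] at bp4
  have h6pos : (0:ℝ) < h ^ 6 := by positivity
  set R : ℝ := A1 + A2 + A3 + A4 with hR
  have lb : f a * (h ^ 6 / 6) ≤ R := by rw [hR]; linarith [bp1.1, bp2.1, bp3.1, bp4.1]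
  have ub : R ≤ f b * (h ^ 6 / 6) := by rw [hR]; linarith [bp1.2, bp2.2, bp3.2, bp4.2]
  have hva : f a ≤ 6 * R / h ^ 6 := by rw [le_div_iff₀ h6pos]; linarith
  have hvb : 6 * R / h ^ 6 ≤ f b := by rw [div_le_iff₀ h6pos]; linarith
  obtain ⟨ξ, hξm, hξv⟩ := intermediate_value_uIcc (hfc.continuousOn)
    (Set.mem_uIcc.mpr (Or.inl ⟨hva, hvb⟩))
  have hsub : Set.uIcc a b ⊆ Set.Icc (x - 2 * h) (x + 2 * h) :=
    Set.OrdConnected.uIcc_subset Set.ordConnected_Icc haK hbK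
  have eq1 : L / h ^ 4 = iteratedDeriv 4 u x + h ^ 2 / 6 * f ξ := by
    rw [hξv, key]
    field_simp
  refine ⟨ξ, hsub hξm, eq1, ?_⟩
  rw [show iteratedDeriv 4 u x + h ^ 2 / 6 * f ξ = L / h ^ 4 from eq1.symm, hL]
  field_simp
  ring
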